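/- Let Γ be a simple graph of order n with minimum degree δ and at least one edge, and let μ* be the Laplacian spectral radius of Γ (the largest eigenvalue of the Laplacian matrix of Γ). Then every global strong offensive alliance S in Γ satisfies |S| ≥ ⌈(n/μ*)·(⌈δ/2⌉+1)⌉; in particular the global strong offensive alliance number satisfies γ_{â_o}(Γ) ≥ ⌈(n/μ*)·(⌈δ/2⌉+1)⌉. -/

import Mathlib

open Finset SimpleGraph

/-- `μ` is the second smallest (counted with multiplicity) value of the family `e`. -/
def IsSecondSmallest {ι : Type*} (e : ι → ℝ) (μ : ℝ) : Prop :=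
  ∃ i₀ i₁ : ι, i₀ ≠ i₁ ∧ e i₀ ≤ μ ∧ e i₁ = μ ∧ ∀ j : ι, j ≠ i₀ → μ ≤ e j

/-- `lam` is the largest value of the family `e`. -/
def IsLargest {ι : Type*} (e : ι → ℝ) (lam : ℝ) : Prop :=
  (∃ i : ι, e i = lam) ∧ ∀ i : ι, e i ≤ lam

open Matrix

lemma rayleigh_le' {V : Type*} [Fintype V] [DecidableEq V] {A : Matrix V V ℝ}
    (hA : A.IsHermitian) (lam : ℝ) (hub : ∀ i, hA.eigenvalues i ≤ lam) (x : V → ℝ) :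
    x ⬝ᵥ (A *ᵥ x) ≤ lam * (x ⬝ᵥ x) := by
  classical
  set T : EuclideanSpace ℝ V →ₗ[ℝ] EuclideanSpace ℝ V := Matrix.toEuclideanLin A with hT
  have hSym : T.IsSymmetric := Matrix.isHermitian_iff_isSymmetric.1 hA
  have hn : Module.finrank ℝ (EuclideanSpace ℝ V) = Fintype.card V :=
    finrank_euclideanSpace
  set b := hSym.eigenvectorBasis hn with hb
  set y : EuclideanSpace ℝ V := (WithLp.equiv 2 (V → ℝ)).symm x with hy
  have h1 : x ⬝ᵥ (A *ᵥ x) = inner ℝ y (T y) := by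
    rw [hT, Matrix.toEuclideanLin_apply]
    simp [PiLp.inner_apply, hy, dotProduct]
    exact Finset.sum_congr rfl fun i _ => mul_comm _ _
  have h2 : x ⬝ᵥ x = inner ℝ y y := by
    simp [PiLp.inner_apply, hy, dotProduct]
    rw [EuclideanSpace.norm_sq_eq]; simp [Real.norm_eq_abs, sq_abs, sq]
  rw [h1, h2]
  have hrepr : ∀ u v : EuclideanSpace ℝ V, (inner ℝ u v : ℝ) = ∑ i, b.repr u i * b.repr v i := by
    intro u v
    rw [← b.repr.inner_map_map u v, PiLp.inner_apply]
    simp [RCLike.inner_apply]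
    exact Finset.sum_congr rfl fun i _ => mul_comm _ _
  rw [hrepr, hrepr]
  have hTy : ∀ i, b.repr (T y) i = hSym.eigenvalues hn i * b.repr y i := fun i =>
    hSym.eigenvectorBasis_apply_self_apply hn y i
  have hub' : ∀ i, hSym.eigenvalues hn i ≤ lam := by
    intro i
    have := hub ((Fintype.equivOfCardEq (Fintype.card_fin (Fintype.card V))) i)
    rwa [Matrix.IsHermitian.eigenvalues, Matrix.IsHermitian.eigenvalues₀,
      Equiv.symm_apply_apply] at this
  calc ∑ i, b.repr y i * b.repr (T y) i = ∑ i, hSym.eigenvalues hn i * (b.repr y i)^2 := by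
        refine Finset.sum_congr rfl fun i _ => ?_
        rw [hTy i]; ring
    _ ≤ ∑ i, lam * (b.repr y i)^2 := by
        refine Finset.sum_le_sum fun i _ => ?_
        exact mul_le_mul_of_nonneg_right (hub' i) (sq_nonneg _)
    _ = lam * ∑ i, b.repr y i * b.repr y i := by
        rw [Finset.mul_sum]; simp_rw [sq]

theorem stmt_11 {V : Type*} [Fintype V] [DecidableEq V]
    (G : SimpleGraph V) [DecidableRel G.Adj]
    (n : ℕ) (hn : Fintype.card V = n)
    (d : ℕ) (hd : G.minDegree = d)
    (hedge : 0 < G.edgeFinset.card)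
    (mus : ℝ)
    (hmus : ∃ hL : (G.lapMatrix ℝ).IsHermitian, IsLargest hL.eigenvalues mus)
    (S : Finset V) (hS : S.Nonempty)
    (hoff : ∀ v ∉ S, (G.neighborFinset v \ S).card + 2 ≤ (G.neighborFinset v ∩ S).card)
    :
    ⌈(n : ℝ) / mus * (((⌈(d : ℝ) / 2⌉ : ℤ) : ℝ) + 1)⌉ ≤ (S.card : ℤ) := by
  classical
  obtain ⟨hL, ⟨_, hub⟩⟩ := hmus
  set Q : (V → ℝ) → ℝ := fun x => ∑ i, ∑ j, if G.Adj i j then (x i - x j)^2 else 0 with hQdef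
  have form : ∀ x : V → ℝ, Q x ≤ 2 * (mus * (x ⬝ᵥ x)) := by
    intro x
    have h := G.lapMatrix_toLinearMap₂' ℝ x
    rw [Matrix.toLinearMap₂'_apply'] at h
    have h2 := rayleigh_le' hL mus hub x
    rw [h] at h2
    rw [hQdef]
    linarith
  have qle : ∀ (P : Finset (V×V)) (x : V → ℝ),
      (∑ p ∈ P, if G.Adj p.1 p.2 then (x p.1 - x p.2)^2 else 0) ≤ Q x := by
    intro P x
    have he : Q x = ∑ p ∈ univ ×ˢ univ, (if G.Adj p.1 p.2 then (x p.1 - x p.2)^2 else 0) :=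
      (Finset.sum_product' _ _ _).symm
    rw [he]
    apply Finset.sum_le_sum_of_subset_of_nonneg (by simp [Finset.subset_iff])
    intros; positivity
  -- mus ≥ 1
  have hmus1 : 1 ≤ mus := by
    obtain ⟨e, he⟩ := Finset.card_pos.mp hedge
    rw [mem_edgeFinset] at he
    induction e using Sym2.ind with
    | _ a b =>
    rw [mem_edgeSet] at he
    have hne : a ≠ b := he.ne
    set x : V → ℝ := fun u => if u = a then (1:ℝ) else 0 with hx
    have h1 := qle {(a,b),(b,a)} x
    have h2 := form x
    have hpair : (∑ p ∈ ({(a,b),(b,a)} : Finset (V×V)),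
        if G.Adj p.1 p.2 then (x p.1 - x p.2)^2 else 0) = 2 := by
      rw [Finset.sum_pair (by simp [hne, hne.symm])]
      simp [hx, he, he.symm, hne.symm]
      norm_num
    have hxx : x ⬝ᵥ x = 1 := by
      simp [dotProduct, hx, ite_mul, mul_ite]
    rw [hxx] at h2
    rw [hpair] at h1
    linarith
  have hmuspos : 0 < mus := by linarith
  -- mus ≥ d + 1 when d ≥ 1
  have hmusd : 1 ≤ d → (d:ℝ) + 1 ≤ mus := by
    intro hd1
    obtain ⟨v, -⟩ := hS
    set D := G.degree v with hD
    have hdD : d ≤ D := hd ▸ G.minDegree_le_degree v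
    have hD1 : 1 ≤ D := le_trans hd1 hdD
    set x : V → ℝ := fun u => if u = v then (D:ℝ) else if G.Adj v u then -1 else 0 with hx
    have hxv : x v = D := by simp [hx]
    have hxn : ∀ u, G.Adj v u → x u = -1 := by
      intro u hu
      have : u ≠ v := fun h => by subst h; exact G.irrefl hu
      simp [hx, this, hu]
    have hdisj : Disjoint (({v} : Finset V) ×ˢ G.neighborFinset v)
        ((G.neighborFinset v) ×ˢ ({v} : Finset V)) := by
      rw [Finset.disjoint_left]
      rintro ⟨p1, p2⟩ hp hq
      simp only [Finset.mem_product, Finset.mem_singleton, mem_neighborFinset] at hp hq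
      exact G.irrefl (hp.1 ▸ hq.1)
    have h1 := qle ((({v} : Finset V) ×ˢ G.neighborFinset v) ∪
        ((G.neighborFinset v) ×ˢ ({v} : Finset V))) x
    rw [Finset.sum_union hdisj] at h1
    have hA : (∑ p ∈ ({v} : Finset V) ×ˢ G.neighborFinset v,
        if G.Adj p.1 p.2 then (x p.1 - x p.2)^2 else 0) = D * ((D:ℝ)+1)^2 := by
      rw [Finset.sum_product, Finset.sum_singleton]
      have hco : ∀ j ∈ G.neighborFinset v,
          (if G.Adj v j then (x v - x j)^2 else 0) = ((D:ℝ)+1)^2 := by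
        intro j hj
        rw [mem_neighborFinset] at hj
        rw [if_pos hj, hxv, hxn j hj]
        ring
      rw [Finset.sum_congr rfl hco, Finset.sum_const, card_neighborFinset_eq_degree]
      simp [nsmul_eq_mul, ← hD]
    have hB : (∑ p ∈ (G.neighborFinset v) ×ˢ ({v} : Finset V),
        if G.Adj p.1 p.2 then (x p.1 - x p.2)^2 else 0) = D * ((D:ℝ)+1)^2 := by
      rw [Finset.sum_product]
      have hco : ∀ j ∈ G.neighborFinset v,
          (∑ p ∈ ({v} : Finset V), if G.Adj j p then (x j - x p)^2 else 0) = ((D:ℝ)+1)^2 := by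
        intro j hj
        rw [mem_neighborFinset] at hj
        rw [Finset.sum_singleton, if_pos hj.symm, hxv, hxn j hj]
        ring
      rw [Finset.sum_congr rfl hco, Finset.sum_const, card_neighborFinset_eq_degree]
      simp [nsmul_eq_mul, ← hD]
    rw [hA, hB] at h1
    have hxx : x ⬝ᵥ x = (D:ℝ)^2 + D := by
      have : ∀ u, x u * x u = (if u = v then (D:ℝ)^2 else 0) + (if G.Adj v u then 1 else 0) := by
        intro u
        by_cases h : u = v
        · subst h; simp [hxv, G.irrefl]; ring
        · by_cases h2 : G.Adj v u
          · rw [hxn u h2]; simp [h, h2]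
          · simp [hx, h, h2]
      rw [dotProduct, Finset.sum_congr rfl (fun u _ => this u), Finset.sum_add_distrib]
      rw [Finset.sum_ite_eq' univ v (fun _ => (D:ℝ)^2)]
      simp only [Finset.mem_univ, if_pos]
      rw [Finset.sum_boole]
      have : (univ.filter (G.Adj v)) = G.neighborFinset v := by
        ext u; simp [mem_neighborFinset]
      rw [this, card_neighborFinset_eq_degree]
    have h3 := form x
    rw [hxx] at h3
    have hDpos : (0:ℝ) < D := by exact_mod_cast hD1
    have h4 : (D:ℝ) * ((D:ℝ)+1) * ((D:ℝ)+1) ≤ mus * ((D:ℝ) * ((D:ℝ)+1)) := by nlinarith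
    have h5 : (D:ℝ) + 1 ≤ mus := by
      have hpos : (0:ℝ) < (D:ℝ) * ((D:ℝ)+1) := by nlinarith
      nlinarith
    have : (d:ℝ) ≤ D := by exact_mod_cast hdD
    linarith
  set cN : ℕ := (d+1)/2 with hcN
  have hnpos : 0 < n := by
    rw [← hn]
    exact Fintype.card_pos_iff.mpr ⟨hS.choose⟩
  have hsle : S.card ≤ n := by rw [← hn]; exact Finset.card_le_univ S
  -- key inequality
  have hkey : (n:ℝ) * ((cN:ℝ) + 1) ≤ mus * S.card := by
    by_cases hSV : S = univ
    · have hsn : S.card = n := by rw [hSV, ← hn]; rfl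
      rw [hsn]
      have hc : (cN:ℝ) + 1 ≤ mus := by
        rcases Nat.eq_zero_or_pos d with h0 | h1
        · have : cN = 0 := by omega
          rw [this]; simpa using hmus1
        · have h2 := hmusd h1
          have : (cN:ℝ) ≤ (d:ℝ) := by exact_mod_cast (by omega : cN ≤ d)
          linarith
      have : (0:ℝ) ≤ n := by positivity
      nlinarith
    · -- S ≠ univ
      have hslt : S.card < n := by
        rcases lt_or_eq_of_le hsle with h | h
        · exact h
        · exact absurd (Finset.eq_univ_of_card S (by rw [h, hn])) hSV
      set s := S.card with hs
      set x : V → ℝ := fun u => if u ∈ S then ((n:ℝ) - s) else -s with hx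
      have hxS : ∀ u ∈ S, x u = (n:ℝ) - s := fun u hu => by simp [hx, hu]
      have hxc : ∀ u ∉ S, x u = -(s:ℝ) := fun u hu => by simp [hx, hu]
      have hdisj : Disjoint ((univ \ S) ×ˢ S) (S ×ˢ (univ \ S)) := by
        rw [Finset.disjoint_left]
        rintro ⟨p1, p2⟩ hp hq
        simp only [Finset.mem_product, Finset.mem_sdiff, Finset.mem_univ, true_and] at hp hq
        exact hp.1 hq.1
      have h1 := qle (((univ \ S) ×ˢ S) ∪ (S ×ˢ (univ \ S))) x
      rw [Finset.sum_union hdisj] at h1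
      have innerbound : ∀ i ∉ S, ((n:ℝ)^2 * ((cN:ℝ)+1)) ≤
          ∑ j ∈ S, (if G.Adj i j then (x i - x j)^2 else 0) := by
        intro i hi
        have hterm : ∀ j ∈ S, (if G.Adj i j then (x i - x j)^2 else 0) =
            (if G.Adj i j then (n:ℝ)^2 else 0) := by
          intro j hj
          by_cases h : G.Adj i j
          · rw [if_pos h, if_pos h, hxc i hi, hxS j hj]; ring
          · simp [h]
        rw [Finset.sum_congr rfl hterm, ← Finset.sum_filter, Finset.sum_const, nsmul_eq_mul]
        have hfil : S.filter (G.Adj i) = G.neighborFinset i ∩ S := by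
          ext u; simp [mem_neighborFinset, and_comm]
        rw [hfil]
        have hcard : cN + 1 ≤ (G.neighborFinset i ∩ S).card := by
          have h2 := hoff i hi
          have h3 : (G.neighborFinset i \ S).card + (G.neighborFinset i ∩ S).card
              = G.degree i := by
            rw [← card_neighborFinset_eq_degree, Finset.card_sdiff_add_card_inter]
          have h4 : d ≤ G.degree i := hd ▸ G.minDegree_le_degree i
          omega
        have : ((cN:ℝ) + 1) ≤ ((G.neighborFinset i ∩ S).card : ℝ) := by exact_mod_cast hcard
        have hn2 : (0:ℝ) ≤ (n:ℝ)^2 := by positivity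
        calc (n:ℝ)^2 * ((cN:ℝ)+1) ≤ (n:ℝ)^2 * ((G.neighborFinset i ∩ S).card : ℝ) := by
              exact mul_le_mul_of_nonneg_left this hn2
          _ = ((G.neighborFinset i ∩ S).card : ℝ) * (n:ℝ)^2 := by ring
      have hAB : (∑ p ∈ S ×ˢ (univ \ S), if G.Adj p.1 p.2 then (x p.1 - x p.2)^2 else 0)
          = (∑ p ∈ (univ \ S) ×ˢ S, if G.Adj p.1 p.2 then (x p.1 - x p.2)^2 else 0) := by
        rw [Finset.sum_product, Finset.sum_product, Finset.sum_comm]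
        apply Finset.sum_congr rfl; intro j _
        apply Finset.sum_congr rfl; intro i _
        exact if_congr (G.adj_comm i j) (by ring) rfl
      rw [hAB] at h1
      have hAlow : ((n:ℝ) - s) * ((n:ℝ)^2 * ((cN:ℝ)+1)) ≤
          ∑ p ∈ (univ \ S) ×ˢ S, (if G.Adj p.1 p.2 then (x p.1 - x p.2)^2 else 0) := by
        rw [Finset.sum_product]
        have hcard : ((univ \ S).card : ℝ) = (n:ℝ) - s := by
          rw [Finset.card_sdiff_of_subset (Finset.subset_univ S), Finset.card_univ, hn, ← hs]
          push_cast [Nat.cast_sub (le_of_lt hslt)]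
          ring
        calc ((n:ℝ) - s) * ((n:ℝ)^2 * ((cN:ℝ)+1))
            = ∑ _i ∈ univ \ S, ((n:ℝ)^2 * ((cN:ℝ)+1)) := by
              rw [Finset.sum_const, nsmul_eq_mul, hcard]
          _ ≤ _ := by
              apply Finset.sum_le_sum
              intro i hi
              exact innerbound i (by simpa using (Finset.mem_sdiff.mp hi).2)
      have hxx : x ⬝ᵥ x = s * ((n:ℝ) - s)^2 + ((n:ℝ) - s) * s^2 := by
        have hterm : ∀ u, x u * x u =
            (if u ∈ S then ((n:ℝ) - s)^2 else (s:ℝ)^2) := by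
          intro u
          by_cases h : u ∈ S
          · rw [hxS u h]; simp [h]; ring
          · rw [hxc u h]; simp [h]; ring
        rw [dotProduct, Finset.sum_congr rfl (fun u _ => hterm u)]
        have h1' : (univ.filter (fun u => u ∈ S)) = S := by ext u; simp
        have h2' : (univ.filter (fun u => u ∉ S)) = univ \ S := by ext u; simp
        rw [Finset.sum_ite, Finset.sum_const, Finset.sum_const, h1', h2', nsmul_eq_mul,
          nsmul_eq_mul, Finset.card_sdiff_of_subset (Finset.subset_univ S), Finset.card_univ, hn,
          Nat.cast_sub (le_of_lt hslt)]
      have h3 := form x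
      rw [hxx] at h3
      have ha : (0:ℝ) < (n:ℝ) - s := by
        have : (s:ℝ) < n := by exact_mod_cast hslt
        linarith
      have hnR : (0:ℝ) < (n:ℝ) := by exact_mod_cast hnpos
      have h6 : (n:ℝ)^2*((cN:ℝ)+1) ≤ mus*((s:ℝ)*n) := by
        apply le_of_mul_le_mul_left _ (by positivity : (0:ℝ) < 2*((n:ℝ)-s))
        nlinarith [h1, hAlow, h3]
      apply le_of_mul_le_mul_left _ hnR
      nlinarith [h6]
  -- conclude
  have hceil : ((⌈(d : ℝ) / 2⌉ : ℤ) : ℝ) = (cN : ℝ) := by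
    have : ⌈(d : ℝ) / 2⌉ = (cN : ℤ) := by
      rw [Int.ceil_eq_iff]
      constructor
      · push_cast
        have : 2 * cN ≤ d + 1 := by omega
        have : (2:ℝ) * cN ≤ (d:ℝ) + 1 := by exact_mod_cast this
        linarith
      · push_cast
        have : d ≤ 2 * cN := by omega
        have : (d:ℝ) ≤ 2 * cN := by exact_mod_cast this
        linarith
    rw [this]
    push_cast
    ring
  rw [Int.ceil_le, hceil]
  push_cast
  rw [div_mul_eq_mul_div, div_le_iff₀ hmuspos]
  calc (n:ℝ) * ((cN:ℝ) + 1) ≤ mus * S.card := hkey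
    _ = S.card * mus := by ring
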